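/- Value iteration converges to the optimal value function: if V* : S → ℝ is a fixed point of the Bellman operator (LV* = V*), then for any initial function V₀ : S → ℝ, the iterates Vₙ = Lⁿ V₀ converge to V* in the sup-norm, i.e. ‖Lⁿ V₀ − V*‖∞ → 0 as n → ∞. -/
import Mathlib


/-- The Bellman operator of a finite MDP with transition probabilities `P`,
reward `R`, and discount factor `γ`:
`(L V)(s) = R s + γ * max_{a} ∑_{s'} P s a s' * V s'`. -/
noncomputable def bellmanOp {S A : Type*} [Fintype S] [Fintype A] [Nonempty A]
    (P : S → A → S → ℝ) (R : S → ℝ) (γ : ℝ) (V : S → ℝ) : S → ℝ :=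
  fun s => R s + γ * Finset.univ.sup' Finset.univ_nonempty
    (fun a : A => ∑ s' : S, P s a s' * V s')

lemma sup'_sub_sup'_le_abs {A : Type*} [Fintype A] [Nonempty A] (f g : A → ℝ) (M : ℝ)
    (h : ∀ a, |f a - g a| ≤ M) :
    Finset.univ.sup' Finset.univ_nonempty f - Finset.univ.sup' Finset.univ_nonempty g ≤ M := by
  rw [sub_le_iff_le_add]
  apply Finset.sup'_le
  intro a _
  have := abs_le.1 (h a)
  have hg : g a ≤ Finset.univ.sup' Finset.univ_nonempty g :=
    Finset.le_sup' _ (Finset.mem_univ a)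
  linarith

lemma bellman_contract {S A : Type*} [Fintype S] [Nonempty S] [Fintype A] [Nonempty A]
    (P : S → A → S → ℝ) (R : S → ℝ) (γ : ℝ) (hγ0 : 0 < γ)
    (hP0 : ∀ s a s', 0 ≤ P s a s') (hP1 : ∀ s a, ∑ s' : S, P s a s' = 1)
    (V W : S → ℝ) (M : ℝ) (h : ∀ s, |V s - W s| ≤ M) :
    ∀ s, |bellmanOp P R γ V s - bellmanOp P R γ W s| ≤ γ * M := by
  intro s
  have key : ∀ a : A, |(∑ s' : S, P s a s' * V s') - ∑ s' : S, P s a s' * W s'| ≤ M := by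
    intro a
    rw [← Finset.sum_sub_distrib]
    calc |∑ s' : S, (P s a s' * V s' - P s a s' * W s')|
        ≤ ∑ s' : S, |P s a s' * V s' - P s a s' * W s'| := Finset.abs_sum_le_sum_abs _ _
      _ ≤ ∑ s' : S, P s a s' * M := by
          apply Finset.sum_le_sum
          intro s' _
          rw [← mul_sub, abs_mul, abs_of_nonneg (hP0 s a s')]
          exact mul_le_mul_of_nonneg_left (h s') (hP0 s a s')
      _ = M := by rw [← Finset.sum_mul, hP1, one_mul]
  simp only [bellmanOp]
  rw [add_sub_add_left_eq_sub, ← mul_sub, abs_mul, abs_of_nonneg hγ0.le]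
  apply mul_le_mul_of_nonneg_left _ hγ0.le
  rw [abs_sub_le_iff]
  constructor
  · exact sup'_sub_sup'_le_abs _ _ _ key
  · exact sup'_sub_sup'_le_abs _ _ _ (fun a => by rw [abs_sub_comm]; exact key a)

/-- Value iteration converges to the optimal value function: if `V*` is a
fixed point of the Bellman operator, then for any initial `V₀` the iterates
`Vₙ = Lⁿ V₀` converge to `V*` in the sup-norm `‖V‖∞ = max_s |V s|`. -/
theorem value_iteration_converges
    {S A : Type*} [Fintype S] [Nonempty S] [Fintype A] [Nonempty A]
    (P : S → A → S → ℝ) (R : S → ℝ) (γ : ℝ) (hγ0 : 0 < γ) (hγ1 : γ < 1)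
    (hP0 : ∀ s a s', 0 ≤ P s a s') (hP1 : ∀ s a, ∑ s' : S, P s a s' = 1)
    (Vstar : S → ℝ) (hfix : bellmanOp P R γ Vstar = Vstar) (V₀ : S → ℝ) :
    Filter.Tendsto
      (fun n : ℕ => Finset.univ.sup' Finset.univ_nonempty
        (fun s : S => |(bellmanOp P R γ)^[n] V₀ s - Vstar s|))
      Filter.atTop (nhds 0) := by
  set M : ℕ → ℝ := fun n => Finset.univ.sup' Finset.univ_nonempty
    (fun s : S => |(bellmanOp P R γ)^[n] V₀ s - Vstar s|) with hM
  have hbound : ∀ n, ∀ s : S, |(bellmanOp P R γ)^[n] V₀ s - Vstar s| ≤ γ ^ n * M 0 := by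
    intro n
    induction n with
    | zero =>
        intro s
        rw [pow_zero, one_mul, hM]
        exact Finset.le_sup' (fun s : S => |(bellmanOp P R γ)^[0] V₀ s - Vstar s|) (Finset.mem_univ s)
    | succ n ih =>
        intro s
        have := bellman_contract P R γ hγ0 hP0 hP1 _ Vstar (γ ^ n * M 0) ih s
        rw [hfix] at this
        rw [Function.iterate_succ_apply']
        calc |bellmanOp P R γ ((bellmanOp P R γ)^[n] V₀) s - Vstar s|
            ≤ γ * (γ ^ n * M 0) := this
          _ = γ ^ (n + 1) * M 0 := by ring
  have hMle : ∀ n, M n ≤ γ ^ n * M 0 := fun n =>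
    Finset.sup'_le _ _ (fun s _ => hbound n s)
  have hM0 : ∀ n, 0 ≤ M n := fun n => by
    obtain ⟨s⟩ := ‹Nonempty S›
    exact le_trans (abs_nonneg _) (Finset.le_sup' (fun s : S => |(bellmanOp P R γ)^[n] V₀ s - Vstar s|) (Finset.mem_univ s))
  have htend : Filter.Tendsto (fun n : ℕ => γ ^ n * M 0) Filter.atTop (nhds 0) := by
    have := tendsto_pow_atTop_nhds_zero_of_lt_one hγ0.le hγ1
    simpa using this.mul_const (M 0)
  exact squeeze_zero hM0 hMle htend
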